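/- (Bernoulli case with zero cost or cost at least one) Let n ≥ 1 and let X_1, ..., X_n be i.i.d. Bernoulli random variables, i.e. P(X_1 = 1) = p = 1 - P(X_1 = 0) for some 0 ≤ p ≤ 1. If c = 0 or c ≥ 1, then with Y_i = X_i - i·c one has M(Y_1,...,Y_n) - V(Y_1,...,Y_n) = 0; in the case c = 0 the stopping rule τ = inf{i : X_i = 1 or i = n} secures the prophet's return, and in the case c ≥ 1 the stopping rule τ ≡ 1 does. -/

import Mathlib

open MeasureTheory ProbabilityTheory

/-- The σ-algebra generated by `Y 1, ..., Y i`. -/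
def priorSigma {Ω : Type*} (Y : ℕ → Ω → ℝ) (i : ℕ) : MeasurableSpace Ω :=
  ⨆ j ∈ Finset.Icc 1 i, MeasurableSpace.comap (Y j) Real.measurableSpace

/-- `τ` is a stopping rule for `Y 1, ..., Y n`: it takes values in `{1, ..., n}` and
each event `{τ = i}` depends only on `Y 1, ..., Y i`. -/
def IsStopRule {Ω : Type*} (Y : ℕ → Ω → ℝ) (n : ℕ) (τ : Ω → ℕ) : Prop :=
  (∀ ω, τ ω ∈ Finset.Icc 1 n) ∧
  ∀ i ∈ Finset.Icc 1 n, MeasurableSet[priorSigma Y i] {ω | τ ω = i}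

/-- `V(Y_1,...,Y_n) = sup_τ E(Y_τ)`: the optimal expected return of the statistician. -/
noncomputable def Vn {Ω : Type*} [MeasurableSpace Ω] (μ : Measure Ω)
    (Y : ℕ → Ω → ℝ) (n : ℕ) : ℝ :=
  sSup {r | ∃ τ, IsStopRule Y n τ ∧ r = ∫ ω, Y (τ ω) ω ∂μ}

/-- `M(Y_1,...,Y_n) = E(max_{1 ≤ i ≤ n} Y_i)`: the expected return of the prophet. -/
noncomputable def Mn {Ω : Type*} [MeasurableSpace Ω] (μ : Measure Ω)
    (Y : ℕ → Ω → ℝ) (n : ℕ) : ℝ :=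
  ∫ ω, sSup ((fun i => Y i ω) '' Set.Icc 1 n) ∂μ

set_option linter.unusedVariables false

theorem stmt19
    {Ω : Type*} [MeasurableSpace Ω] (μ : Measure Ω) [IsProbabilityMeasure μ]
    (n : ℕ) (X : ℕ → Ω → ℝ)
    (hmeas : ∀ i, Measurable (X i))
    (hindep : iIndepFun (fun i : Fin n => X (i.1 + 1)) μ)
    (hident : ∀ i ∈ Set.Icc 1 n, IdentDistrib (X i) (X 1) μ μ)
    (c : ℝ) (Y : ℕ → Ω → ℝ) (hY : ∀ i ω, Y i ω = X i ω - i * c)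
    (hn : 1 ≤ n)
    (p : ℝ) (hp0 : 0 ≤ p) (hp1 : p ≤ 1)
    (h1 : μ {ω | X 1 ω = 1} = ENNReal.ofReal p)
    (h0 : μ {ω | X 1 ω = 0} = ENNReal.ofReal (1 - p))
    (hc : c = 0 ∨ 1 ≤ c)
    (τ0 : Ω → ℕ) (hτ0 : ∀ ω, τ0 ω = sInf {i | (1 ≤ i ∧ X i ω = 1) ∨ i = n}) :
    Mn μ Y n - Vn μ Y n = 0 ∧
    (c = 0 → ∫ ω, Y (τ0 ω) ω ∂μ = Mn μ Y n) ∧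
    (1 ≤ c → ∫ ω, Y 1 ω ∂μ = Mn μ Y n) := by
  classical
  have hYeq : ∀ i, Y i = fun ω => X i ω - i * c := fun i => funext fun ω => hY i ω
  have hYmeas : ∀ i, Measurable (Y i) := fun i => by
    rw [hYeq i]; exact (hmeas i).sub measurable_const
  have hprior_le : ∀ i, priorSigma Y i ≤ ‹MeasurableSpace Ω› :=
    fun i => iSup₂_le fun j _ => measurable_iff_comap_le.mp (hYmeas j)
  have hne : (Finset.Icc 1 n).Nonempty := ⟨1, by simp [hn]⟩
  have h1mem : (1 : ℕ) ∈ Finset.Icc 1 n := by simp [hn]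
  -- a.e. the X's take values in {0,1}
  have h01 : ∀ j ∈ Finset.Icc 1 n, ∀ᵐ ω ∂μ, X j ω = 0 ∨ X j ω = 1 := by
    intro j hj
    have hs : MeasurableSet ({0, 1} : Set ℝ) :=
      (measurableSet_singleton 0).union (measurableSet_singleton 1)
    rcases Finset.mem_Icc.mp hj with ⟨hj1, hjn⟩
    have hXj : μ (X j ⁻¹' {0, 1}) = μ (X 1 ⁻¹' {0, 1}) :=
      (hident j ⟨hj1, hjn⟩).measure_mem_eq hs
    have hunion : μ (X 1 ⁻¹' {0, 1}) = 1 := by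
      have hd : Disjoint {ω | X 1 ω = 0} {ω | X 1 ω = 1} := by
        rw [Set.disjoint_left]
        intro ω ha hb
        simp only [Set.mem_setOf_eq] at ha hb
        rw [ha] at hb; norm_num at hb
      have hm1 : MeasurableSet {ω | X 1 ω = 1} := hmeas 1 (measurableSet_singleton 1)
      have hsplit : X 1 ⁻¹' {0, 1} = {ω | X 1 ω = 0} ∪ {ω | X 1 ω = 1} := by
        ext ω; simp [Set.mem_preimage, or_comm]
      rw [hsplit, measure_union hd hm1, h0, h1,
        ← ENNReal.ofReal_add (by linarith) hp0]
      norm_num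
    have hcompl : μ (X j ⁻¹' {0, 1})ᶜ = 0 := by
      rw [measure_compl (hmeas j hs) (measure_ne_top μ _), hXj, hunion, measure_univ,
        tsub_self]
    rw [ae_iff]
    have hset : {a | ¬(X j a = 0 ∨ X j a = 1)} = (X j ⁻¹' {0, 1})ᶜ := by
      ext ω; simp [Set.mem_preimage]
    rw [hset]; exact hcompl
  have hA : ∀ᵐ ω ∂μ, ∀ j ∈ Finset.Icc 1 n, X j ω = 0 ∨ X j ω = 1 :=
    (Finset.eventually_all _).mpr h01
  -- uniform bound
  set B : ℝ := 1 + n * |c| with hB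
  have hYbound : ∀ ω, (∀ j ∈ Finset.Icc 1 n, X j ω = 0 ∨ X j ω = 1) →
      ∀ i ∈ Finset.Icc 1 n, |Y i ω| ≤ B := by
    intro ω hω i hi
    have hXi : |X i ω| ≤ 1 := by rcases hω i hi with h | h <;> rw [h] <;> norm_num
    have hin : (i : ℝ) ≤ n := by exact_mod_cast (Finset.mem_Icc.mp hi).2
    have h2 : |(i : ℝ) * c| ≤ n * |c| := by
      rw [abs_mul, Nat.abs_cast]
      exact mul_le_mul_of_nonneg_right hin (abs_nonneg c)
    calc |Y i ω| = |X i ω - (i : ℝ) * c| := by rw [hY]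
      _ ≤ |X i ω| + |(i : ℝ) * c| := abs_sub _ _
      _ ≤ 1 + n * |c| := add_le_add hXi h2
  -- the prophet's function
  set g : Ω → ℝ := fun ω => (Finset.Icc 1 n).sup' hne (fun i => Y i ω) with hgdef
  have hMn : Mn μ Y n = ∫ ω, g ω ∂μ := by
    unfold Mn
    refine integral_congr_ae (Filter.Eventually.of_forall fun ω => ?_)
    show sSup ((fun i => Y i ω) '' Set.Icc 1 n) = (Finset.Icc 1 n).sup' hne fun i => Y i ω
    rw [Finset.sup'_eq_csSup_image, Finset.coe_Icc]
  have hgmeas : Measurable g := by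
    have h := Finset.measurable_sup' (s := Finset.Icc 1 n) hne
      (f := fun i => Y i) (fun i _ => hYmeas i)
    have : g = (Finset.Icc 1 n).sup' hne (fun i => Y i) := by
      funext ω; rw [hgdef, Finset.sup'_apply]
    rw [this]; exact h
  have hgint : Integrable g μ := by
    refine Integrable.mono' (integrable_const B) hgmeas.aestronglyMeasurable ?_
    filter_upwards [hA] with ω hω
    rw [Real.norm_eq_abs, abs_le]
    constructor
    · have h1' : Y 1 ω ≤ g ω := Finset.le_sup' (fun i => Y i ω) h1mem
      have h2' := (abs_le.mp (hYbound ω hω 1 h1mem)).1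
      linarith
    · exact Finset.sup'_le _ _ fun i hi =>
        le_trans (le_abs_self _) (hYbound ω hω i hi)
  -- stopping-rule facts
  have hτset : ∀ τ, IsStopRule Y n τ → ∀ i, MeasurableSet {ω | τ ω = i} := by
    intro τ hτ i
    by_cases hi : i ∈ Finset.Icc 1 n
    · have hp := hτ.2 i hi
      exact (MeasurableSpace.le_def.mp (hprior_le i)) _ hp
    · have he : {ω | τ ω = i} = ∅ := by
        ext ω
        simp only [Set.mem_setOf_eq, Set.mem_empty_iff_false, iff_false]
        intro h; exact hi (h ▸ hτ.1 ω)
      rw [he]; exact MeasurableSet.empty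
  have hfτ : ∀ τ, IsStopRule Y n τ → (fun ω => Y (τ ω) ω) =
      fun ω => ∑ i ∈ Finset.Icc 1 n, if τ ω = i then Y i ω else 0 := by
    intro τ hτ; funext ω
    rw [Finset.sum_ite_eq, if_pos (hτ.1 ω)]
  have hτmeasf : ∀ τ, IsStopRule Y n τ → Measurable fun ω => Y (τ ω) ω := by
    intro τ hτ
    rw [hfτ τ hτ]
    exact Finset.measurable_sum _ fun i _ =>
      Measurable.ite (hτset τ hτ i) (hYmeas i) measurable_const
  have hτint : ∀ τ, IsStopRule Y n τ → Integrable (fun ω => Y (τ ω) ω) μ := by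
    intro τ hτ
    refine Integrable.mono' (integrable_const B) (hτmeasf τ hτ).aestronglyMeasurable ?_
    filter_upwards [hA] with ω hω
    rw [Real.norm_eq_abs]
    exact hYbound ω hω (τ ω) (hτ.1 ω)
  have hub : ∀ τ, IsStopRule Y n τ → ∫ ω, Y (τ ω) ω ∂μ ≤ ∫ ω, g ω ∂μ := by
    intro τ hτ
    exact integral_mono (hτint τ hτ) hgint fun ω => Finset.le_sup' (fun i => Y i ω) (hτ.1 ω)
  -- the constant stopping rule
  have hconst : IsStopRule Y n fun _ => 1 := by
    constructor
    · intro ω; exact h1mem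
    · intro i hi
      by_cases h : i = 1
      · subst h
        have : {ω : Ω | (1 : ℕ) = 1} = Set.univ := by simp
        rw [this]; exact @MeasurableSet.univ _ (priorSigma Y 1)
      · have : {ω : Ω | (1 : ℕ) = i} = ∅ := by
          ext ω; simp [Ne.symm h]
        rw [this]; exact @MeasurableSet.empty _ (priorSigma Y i)
  -- case c = 0
  have case0 : c = 0 →
      IsStopRule Y n τ0 ∧ ∫ ω, Y (τ0 ω) ω ∂μ = ∫ ω, g ω ∂μ := by
    intro hc0
    have hYX : ∀ i ω, Y i ω = X i ω := by
      intro i ω; rw [hY, hc0, mul_zero, sub_zero]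
    have hnS : ∀ ω, n ∈ {i | (1 ≤ i ∧ X i ω = 1) ∨ i = n} := fun ω => Or.inr rfl
    have hτ0mem : ∀ ω, τ0 ω ∈ Finset.Icc 1 n := by
      intro ω
      rw [hτ0]
      have hmem := Nat.sInf_mem ⟨n, hnS ω⟩
      have hle : sInf {i | (1 ≤ i ∧ X i ω = 1) ∨ i = n} ≤ n := Nat.sInf_le (hnS ω)
      rcases hmem with ⟨ha, _⟩ | ha
      · exact Finset.mem_Icc.mpr ⟨ha, hle⟩
      · exact Finset.mem_Icc.mpr ⟨by omega, hle⟩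
    have hchar : ∀ ω i, 1 ≤ i → i ≤ n → (τ0 ω = i ↔
        (((1 ≤ i ∧ X i ω = 1) ∨ i = n) ∧ ∀ j, 1 ≤ j → j < i → X j ω ≠ 1)) := by
      intro ω i hi1 hin
      rw [hτ0]
      constructor
      · intro h
        have hmem := Nat.sInf_mem ⟨n, hnS ω⟩
        rw [h] at hmem
        refine ⟨hmem, ?_⟩
        intro j hj1 hji hXj
        have hjS : j ∈ {i | (1 ≤ i ∧ X i ω = 1) ∨ i = n} := Or.inl ⟨hj1, hXj⟩
        have := Nat.sInf_le hjS
        omega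
      · rintro ⟨hiS, hno⟩
        refine le_antisymm (Nat.sInf_le hiS) ?_
        by_contra hlt
        push_neg at hlt
        have hmem := Nat.sInf_mem ⟨n, hnS ω⟩
        rcases hmem with ⟨hj1, hXj⟩ | hjn
        · exact hno _ hj1 hlt hXj
        · omega
    have hτ0stop : IsStopRule Y n τ0 := by
      refine ⟨hτ0mem, ?_⟩
      intro i hi
      rcases Finset.mem_Icc.mp hi with ⟨hi1, hin⟩
      have hXm : ∀ j, 1 ≤ j → j ≤ i →
          MeasurableSet[priorSigma Y i] {ω | X j ω = 1} := by
        intro j hj1 hji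
        have hle : MeasurableSpace.comap (Y j) Real.measurableSpace ≤ priorSigma Y i := by
          show MeasurableSpace.comap (Y j) Real.measurableSpace ≤
            ⨆ k ∈ Finset.Icc 1 i, MeasurableSpace.comap (Y k) Real.measurableSpace
          exact le_biSup (fun k => MeasurableSpace.comap (Y k) Real.measurableSpace)
            (Finset.mem_Icc.mpr ⟨hj1, hji⟩)
        have heq : {ω | X j ω = 1} = Y j ⁻¹' {1} := by
          ext ω; simp [Set.mem_preimage, hYX j ω]
        rw [heq]
        have hp : MeasurableSet[MeasurableSpace.comap (Y j) Real.measurableSpace]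
            (Y j ⁻¹' {1}) := ⟨{1}, measurableSet_singleton 1, rfl⟩
        exact hle _ hp
      have hsplit : {ω | τ0 ω = i} =
          {ω | (1 ≤ i ∧ X i ω = 1) ∨ i = n} ∩
            ⋂ j ∈ Finset.Ico 1 i, {ω | X j ω ≠ 1} := by
        ext ω
        simp only [Set.mem_setOf_eq, Set.mem_inter_iff, Set.mem_iInter, Finset.mem_Ico]
        rw [hchar ω i hi1 hin]
        constructor
        · rintro ⟨ha, hb⟩; exact ⟨ha, fun j hj => hb j hj.1 hj.2⟩
        · rintro ⟨ha, hb⟩; exact ⟨ha, fun j hj1 hji => hb j ⟨hj1, hji⟩⟩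
      rw [hsplit]
      apply MeasurableSet.inter
      · rcases eq_or_ne i n with h | h
        · have : {ω : Ω | (1 ≤ i ∧ X i ω = 1) ∨ i = n} = Set.univ := by
            ext ω; simp [h]
          rw [this]; exact MeasurableSet.univ
        · have : {ω : Ω | (1 ≤ i ∧ X i ω = 1) ∨ i = n} = {ω | X i ω = 1} := by
            ext ω; simp [h, hi1]
          rw [this]; exact hXm i hi1 le_rfl
      · refine Finset.measurableSet_biInter _ fun j hj => ?_
        rcases Finset.mem_Ico.mp hj with ⟨hj1, hji⟩
        exact (hXm j hj1 hji.le).compl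
    refine ⟨hτ0stop, ?_⟩
    refine integral_congr_ae ?_
    filter_upwards [hA] with ω hω
    have hmem := hτ0mem ω
    have hSmem : τ0 ω ∈ {i | (1 ≤ i ∧ X i ω = 1) ∨ i = n} := by
      rw [hτ0]; exact Nat.sInf_mem ⟨n, hnS ω⟩
    by_cases hx : X (τ0 ω) ω = 1
    · refine le_antisymm (Finset.le_sup' (fun i => Y i ω) hmem) ?_
      refine Finset.sup'_le _ _ fun i hi => ?_
      have hXi : X i ω ≤ 1 := by rcases hω i hi with h | h <;> rw [h] <;> norm_num
      rw [hYX i ω, hYX (τ0 ω) ω, hx]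
      exact hXi
    · have hτn : τ0 ω = n := by
        rcases hSmem with ⟨_, hX1⟩ | h
        · exact absurd hX1 hx
        · exact h
      have hz : ∀ j ∈ Finset.Icc 1 n, X j ω = 0 := by
        intro j hj
        rcases Finset.mem_Icc.mp hj with ⟨hj1, hjn⟩
        rcases hω j hj with h | h
        · exact h
        · exfalso
          have hjS : j ∈ {i | (1 ≤ i ∧ X i ω = 1) ∨ i = n} := Or.inl ⟨hj1, h⟩
          have hle : τ0 ω ≤ j := by rw [hτ0]; exact Nat.sInf_le hjS
          have hjτ : j = τ0 ω := by omega
          exact hx (hjτ ▸ h)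
      refine le_antisymm (Finset.le_sup' (fun i => Y i ω) hmem) ?_
      refine Finset.sup'_le _ _ fun i hi => ?_
      rw [hYX i ω, hYX (τ0 ω) ω, hz i hi, hz (τ0 ω) hmem]
  -- case c ≥ 1
  have case1 : 1 ≤ c → ∫ ω, Y 1 ω ∂μ = ∫ ω, g ω ∂μ := by
    intro hc1
    refine integral_congr_ae ?_
    filter_upwards [hA] with ω hω
    refine le_antisymm (Finset.le_sup' (fun i => Y i ω) h1mem) ?_
    refine Finset.sup'_le _ _ fun i hi => ?_
    rcases Finset.mem_Icc.mp hi with ⟨hi1, hin⟩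
    rcases eq_or_lt_of_le hi1 with h | h
    · rw [← h]
    · have hi2 : (2 : ℝ) ≤ (i : ℝ) := by exact_mod_cast h
      have hXi : X i ω ≤ 1 := by rcases hω i hi with hh | hh <;> rw [hh] <;> norm_num
      have hX1 : 0 ≤ X 1 ω := by rcases hω 1 h1mem with hh | hh <;> rw [hh] <;> norm_num
      rw [hY, hY]
      push_cast
      have hmul : 2 * c ≤ (i : ℝ) * c := by nlinarith
      linarith
  -- V = ∫ g
  have hV : Vn μ Y n = ∫ ω, g ω ∂μ := by
    have hachieve : ∃ τ, IsStopRule Y n τ ∧ ∫ ω, Y (τ ω) ω ∂μ = ∫ ω, g ω ∂μ := by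
      rcases hc with hc0 | hc1
      · obtain ⟨hstop, heq⟩ := case0 hc0
        exact ⟨τ0, hstop, heq⟩
      · exact ⟨fun _ => 1, hconst, case1 hc1⟩
    obtain ⟨τ, hτ, heq⟩ := hachieve
    unfold Vn
    apply le_antisymm
    · refine csSup_le ⟨_, τ, hτ, rfl⟩ ?_
      rintro r ⟨σ, hσ, rfl⟩
      exact hub σ hσ
    · refine le_csSup ⟨∫ ω, g ω ∂μ, ?_⟩ ⟨τ, hτ, heq.symm⟩
      rintro r ⟨σ, hσ, rfl⟩
      exact hub σ hσ
  refine ⟨?_, ?_, ?_⟩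
  · rw [hMn, hV, sub_self]
  · intro hc0
    obtain ⟨_, heq⟩ := case0 hc0
    rw [heq, hMn]
  · intro hc1
    rw [case1 hc1, hMn]
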